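/- There exists λ̂ ≥ (6^6/5^5)·(4πN/Vol(V)) such that for every λ > λ̂ there is a solution v_λ of the reduced equation Δv = λ e^{u_0+v}(e^{u_0+v} − 1)^5 + 4πN/Vol(V) which is a local minimum point of the functional I_λ with respect to the norm ‖v‖ = (∫_V (|∇v|² + v²) dμ)^{1/2}. -/

import Mathlib

open Real

/-- The graph Laplacian: `Δu(x) = (1/μ(x)) Σ_y w(x,y)(u(y) − u(x))`. -/
noncomputable def lapl {V : Type*} [Fintype V] (μ : V → ℝ) (w : V → V → ℝ) (u : V → ℝ) (x : V) : ℝ :=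
  (1 / μ x) * ∑ y, w x y * (u y - u x)

/-- The integral on the graph: `∫_V f dμ = Σ_x μ(x) f(x)`. -/
noncomputable def integ {V : Type*} [Fintype V] (μ : V → ℝ) (f : V → ℝ) : ℝ := ∑ x, μ x * f x

/-- The volume of the graph: `Vol(V) = Σ_x μ(x)`. -/
noncomputable def vol {V : Type*} [Fintype V] (μ : V → ℝ) : ℝ := ∑ x, μ x

/-- The Dirac mass at `p`. -/
noncomputable def dirac {V : Type*} [DecidableEq V] (μ : V → ℝ) (p x : V) : ℝ :=
  if x = p then 1 / μ p else 0

/-- The squared length of the gradient: `|∇u|²(x) = (1/(2μ(x))) Σ_y w(x,y)(u(y) − u(x))²`. -/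
noncomputable def gradSq {V : Type*} [Fintype V] (μ : V → ℝ) (w : V → V → ℝ) (u : V → ℝ) (x : V) : ℝ :=
  (1 / (2 * μ x)) * ∑ y, w x y * (u y - u x) ^ 2

/-- The gradient form `Γ(u,φ)(x) = (1/(2μ(x))) Σ_y w(x,y)(u(y) − u(x))(φ(y) − φ(x))`. -/
noncomputable def gamma {V : Type*} [Fintype V] (μ : V → ℝ) (w : V → V → ℝ) (u φ : V → ℝ) (x : V) : ℝ :=
  (1 / (2 * μ x)) * ∑ y, w x y * (u y - u x) * (φ y - φ x)

/-- `u` solves the generalized Chern–Simons equation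
    `Δu = λ e^u (e^u − 1)^5 + 4π Σ_s δ_{p_s}` with parameter `lam`. -/
noncomputable def isSol {V : Type*} [Fintype V] [DecidableEq V] (μ : V → ℝ) (w : V → V → ℝ)
    {N : ℕ} (p : Fin N → V) (lam : ℝ) (u : V → ℝ) : Prop :=
  ∀ x, lapl μ w u x =
    lam * Real.exp (u x) * (Real.exp (u x) - 1) ^ 5 + 4 * π * ∑ s, dirac μ (p s) x

/-- The energy functional
    `I_λ(v) = ∫_V [ (1/2)|∇v|² + (λ/6)(e^{u₀+v} − 1)^6 + (4πN/Vol(V)) v ] dμ`. -/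
noncomputable def energy {V : Type*} [Fintype V] (μ : V → ℝ) (w : V → V → ℝ)
    (u0 : V → ℝ) (N : ℕ) (lam : ℝ) (v : V → ℝ) : ℝ :=
  integ μ (fun x => (1 / 2) * gradSq μ w v x
    + (lam / 6) * (Real.exp (u0 x + v x) - 1) ^ 6 + (4 * π * N / vol μ) * v x)

/-- The Sobolev `W^{1,2}` norm `(∫_V (|∇v|² + v²) dμ)^{1/2}`. -/
noncomputable def sobNorm {V : Type*} [Fintype V] (μ : V → ℝ) (w : V → V → ℝ)
    (v : V → ℝ) : ℝ :=
  Real.sqrt (integ μ (fun x => gradSq μ w v x + v x ^ 2))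

/-- The derivative of the energy functional at `v` in direction `φ`:
    `∫_V Γ(v,φ) dμ + λ ∫_V e^{u₀+v}(e^{u₀+v} − 1)^5 φ dμ + (4πN/Vol(V)) ∫_V φ dμ`. -/
noncomputable def dEnergy {V : Type*} [Fintype V] (μ : V → ℝ) (w : V → V → ℝ)
    (u0 : V → ℝ) (N : ℕ) (lam : ℝ) (v φ : V → ℝ) : ℝ :=
  integ μ (gamma μ w v φ)
    + lam * integ μ (fun x => Real.exp (u0 x + v x) * (Real.exp (u0 x + v x) - 1) ^ 5 * φ x)
    + (4 * π * N / vol μ) * integ μ φ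

lemma my_lapl_add {V : Type*} [Fintype V] (μ : V → ℝ) (w : V → V → ℝ) (g h : V → ℝ) (x : V) :
    lapl μ w (fun y => g y + h y) x = lapl μ w g x + lapl μ w h x := by
  unfold lapl
  rw [← mul_add, ← Finset.sum_add_distrib]
  congr 1
  apply Finset.sum_congr rfl
  intro y _
  ring

lemma my_green {V : Type*} [Fintype V] (μ : V → ℝ) (w : V → V → ℝ)
    (hsymm : ∀ x y, w x y = w y x) (hmu : ∀ x, 0 < μ x) (g φ : V → ℝ) :
    integ μ (gamma μ w g φ) = - integ μ (fun x => lapl μ w g x * φ x) := by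
  unfold integ gamma lapl
  have h1 : ∀ x : V, μ x * ((1 / (2 * μ x)) * ∑ y, w x y * (g y - g x) * (φ y - φ x))
      = (1/2) * ∑ y, w x y * (g y - g x) * (φ y - φ x) := by
    intro x
    have := (hmu x).ne'
    field_simp
  have h2 : ∀ x : V, μ x * ((1 / μ x * ∑ y, w x y * (g y - g x)) * φ x)
      = ∑ y, w x y * (g y - g x) * φ x := by
    intro x
    have hx := (hmu x).ne'
    calc μ x * ((1 / μ x * ∑ y, w x y * (g y - g x)) * φ x)
        = (μ x / μ x) * ((∑ y, w x y * (g y - g x)) * φ x) := by ring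
      _ = (∑ y, w x y * (g y - g x)) * φ x := by rw [div_self hx, one_mul]
      _ = ∑ y, w x y * (g y - g x) * φ x := Finset.sum_mul ..
  simp only [h1]
  rw [← Finset.sum_neg_distrib]
  calc ∑ x, (1/2) * ∑ y, w x y * (g y - g x) * (φ y - φ x)
      = ∑ x, ((1/2) * ∑ y, w x y * (g y - g x) * φ y
            - (1/2) * ∑ y, w x y * (g y - g x) * φ x) := by
        apply Finset.sum_congr rfl; intro x _
        rw [← mul_sub, ← Finset.sum_sub_distrib]
        congr 1; apply Finset.sum_congr rfl; intro y _; ring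
    _ = (1/2) * (∑ x, ∑ y, w x y * (g y - g x) * φ y)
        - (1/2) * (∑ x, ∑ y, w x y * (g y - g x) * φ x) := by
        rw [Finset.sum_sub_distrib, Finset.mul_sum, Finset.mul_sum]
    _ = - ∑ x, ∑ y, w x y * (g y - g x) * φ x := by
        have swap : (∑ x, ∑ y, w x y * (g y - g x) * φ y)
            = ∑ x, ∑ y, -(w x y * (g y - g x) * φ x) := by
          rw [Finset.sum_comm]
          apply Finset.sum_congr rfl; intro a _
          apply Finset.sum_congr rfl; intro b _
          rw [hsymm b a]; ring
        rw [swap]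
        simp [Finset.sum_neg_distrib]
        ring
    _ = ∑ x, -(μ x * ((1 / μ x * ∑ y, w x y * (g y - g x)) * φ x)) := by
        simp only [h2, Finset.sum_neg_distrib]

lemma my_phi_hasDeriv (t : ℝ) :
    HasDerivAt (fun s => (Real.exp s - 1)^6) (6 * Real.exp t * (Real.exp t - 1)^5) t := by
  have h := ((Real.hasDerivAt_exp t).sub_const 1).fun_pow 6
  refine h.congr_deriv ?_
  ring

lemma my_phi'_hasDeriv (t : ℝ) :
    HasDerivAt (fun s => 6 * Real.exp s * (Real.exp s - 1)^5)
      (6 * Real.exp t * (Real.exp t - 1)^4 * (6 * Real.exp t - 1)) t := by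
  have h1 : HasDerivAt (fun s => 6 * Real.exp s) (6 * Real.exp t) t :=
    (Real.hasDerivAt_exp t).const_mul 6
  have h2 := ((Real.hasDerivAt_exp t).sub_const 1).fun_pow 5
  have h := h1.mul h2
  refine h.congr_deriv ?_
  ring

lemma my_phi'_mono : MonotoneOn (fun s => 6 * Real.exp s * (Real.exp s - 1)^5)
    (Set.Ici (-Real.log 6)) := by
  apply monotoneOn_of_deriv_nonneg (convex_Ici _)
  · apply Continuous.continuousOn
    continuity
  · intro x hx
    exact (my_phi'_hasDeriv x).differentiableAt.differentiableWithinAt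
  · intro x hx
    rw [interior_Ici] at hx
    rw [(my_phi'_hasDeriv x).deriv]
    have h6 : (1:ℝ)/6 < Real.exp x := by
      have : Real.exp (-Real.log 6) < Real.exp x := Real.exp_lt_exp.2 hx
      rw [Real.exp_neg, Real.exp_log (by norm_num)] at this
      linarith [this]
    have : 0 ≤ 6 * Real.exp x - 1 := by linarith
    positivity

lemma my_tangent6 {a b : ℝ} (ha : -Real.log 6 ≤ a) (hb : -Real.log 6 ≤ b) :
    (Real.exp a - 1)^6 + 6 * Real.exp a * (Real.exp a - 1)^5 * (b - a) ≤ (Real.exp b - 1)^6 := by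
  set φ := fun s : ℝ => (Real.exp s - 1)^6 with hφ
  set ψ := fun s : ℝ => 6 * Real.exp s * (Real.exp s - 1)^5 with hψ
  rcases lt_trichotomy a b with hab | hab | hab
  · obtain ⟨ξ, hξ, hslope⟩ := exists_hasDerivAt_eq_slope φ ψ hab
      (Continuous.continuousOn (by continuity)) (fun x _ => my_phi_hasDeriv x)
    have hmono : ψ a ≤ ψ ξ := my_phi'_mono (Set.mem_Ici.2 ha)
      (Set.mem_Ici.2 (le_trans ha hξ.1.le)) hξ.1.le
    have hba : (0:ℝ) < b - a := by linarith
    have : φ b - φ a = ψ ξ * (b - a) := by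
      field_simp at hslope
      linarith [hslope]
    have key : ψ a * (b - a) ≤ ψ ξ * (b - a) := mul_le_mul_of_nonneg_right hmono hba.le
    show φ a + ψ a * (b - a) ≤ φ b
    linarith
  · simp [hab]
  · obtain ⟨ξ, hξ, hslope⟩ := exists_hasDerivAt_eq_slope φ ψ hab
      (Continuous.continuousOn (by continuity)) (fun x _ => my_phi_hasDeriv x)
    have hmono : ψ ξ ≤ ψ a := my_phi'_mono
      (Set.mem_Ici.2 (le_trans hb hξ.1.le)) (Set.mem_Ici.2 ha) hξ.2.le
    have hba : (0:ℝ) < a - b := by linarith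
    have : φ a - φ b = ψ ξ * (a - b) := by
      field_simp at hslope
      linarith [hslope]
    have key : ψ ξ * (a - b) ≤ ψ a * (a - b) := mul_le_mul_of_nonneg_right hmono hba.le
    show φ a + ψ a * (b - a) ≤ φ b
    nlinarith [key, this]

lemma my_deriv_nonpos_left {ψ : ℝ → ℝ} {d s : ℝ} (h : HasDerivAt ψ d 0) (hs : s < 0)
    (hmin : ∀ t, s ≤ t → t ≤ 0 → ψ 0 ≤ ψ t) : d ≤ 0 := by
  have ht : Filter.Tendsto (slope ψ 0) (nhdsWithin 0 (Set.Iio 0)) (nhds d) := by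
    refine (hasDerivAt_iff_tendsto_slope.1 h).mono_left (nhdsWithin_mono 0 ?_)
    intro t ht
    exact ne_of_lt ht
  refine le_of_tendsto ht ?_
  filter_upwards [Ioo_mem_nhdsLT_of_mem (Set.mem_Ioc.2 ⟨hs, le_refl (0:ℝ)⟩)] with t htt
  have h1 : ψ 0 ≤ ψ t := hmin t htt.1.le htt.2.le
  have : slope ψ 0 t = (ψ t - ψ 0) / t := by
    rw [slope_def_field]
    ring_nf
  rw [this]
  exact div_nonpos_of_nonneg_of_nonpos (by linarith) htt.2.le

lemma my_deriv_nonneg_right {ψ : ℝ → ℝ} {d s : ℝ} (h : HasDerivAt ψ d 0) (hs : 0 < s)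
    (hmin : ∀ t, 0 ≤ t → t ≤ s → ψ 0 ≤ ψ t) : 0 ≤ d := by
  have ht : Filter.Tendsto (slope ψ 0) (nhdsWithin 0 (Set.Ioi 0)) (nhds d) := by
    refine (hasDerivAt_iff_tendsto_slope.1 h).mono_left (nhdsWithin_mono 0 ?_)
    intro t ht
    exact ne_of_gt ht
  refine ge_of_tendsto ht ?_
  filter_upwards [Ioo_mem_nhdsGT_of_mem (Set.mem_Ico.2 ⟨le_refl (0:ℝ), hs⟩)] with t htt
  have h1 : ψ 0 ≤ ψ t := hmin t htt.1.le htt.2.le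
  have : slope ψ 0 t = (ψ t - ψ 0) / t := by
    rw [slope_def_field]
    ring_nf
  rw [this]
  exact div_nonneg (by linarith) htt.1.le

lemma my_term_hasDerivAt {V : Type*} [Fintype V] (μ : V → ℝ) (w : V → V → ℝ) (u0 : V → ℝ)
    (x : V) (lam c : ℝ) (v e : V → ℝ) :
    HasDerivAt (fun t : ℝ => μ x * ((1/2) * ((1/(2*μ x)) * ∑ y, w x y * ((v y + t * e y) - (v x + t * e x))^2)
        + (lam/6) * (Real.exp (u0 x + (v x + t * e x)) - 1)^6 + c * (v x + t * e x)))
      (μ x * ((1/(2*μ x)) * (∑ y, w x y * (v y - v x) * (e y - e x))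
        + lam * (Real.exp (u0 x + v x) * (Real.exp (u0 x + v x) - 1)^5 * e x) + c * e x)) 0 := by
  have hx : HasDerivAt (fun t : ℝ => v x + t * e x) (e x) 0 := by
    simpa using ((hasDerivAt_id (0:ℝ)).mul_const (e x)).const_add (v x)
  -- gradient part
  have hgrad : HasDerivAt (fun t : ℝ => ∑ y, w x y * ((v y + t * e y) - (v x + t * e x))^2)
      (∑ y, w x y * (2 * (v y - v x) * (e y - e x))) 0 := by
    apply HasDerivAt.fun_sum
    intro y _
    have hy : HasDerivAt (fun t : ℝ => v y + t * e y) (e y) 0 := by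
      simpa using ((hasDerivAt_id (0:ℝ)).mul_const (e y)).const_add (v y)
    have h0 := (hy.fun_sub hx).fun_pow 2
    have h1 := h0.const_mul (w x y)
    refine h1.congr_deriv ?_
    norm_num
  have hg2 := (hgrad.const_mul ((1:ℝ)/(2*μ x))).const_mul ((1:ℝ)/2)
  -- exponential part
  have ha : HasDerivAt (fun t : ℝ => u0 x + (v x + t * e x)) (e x) 0 := hx.const_add (u0 x)
  have hb := ((ha.exp.sub_const 1).fun_pow 6).const_mul (lam/6)
  -- linear part
  have hc := hx.const_mul c
  have htot := ((hg2.fun_add hb).fun_add hc).const_mul (μ x)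
  refine htot.congr_deriv ?_
  have hsum2 : (∑ y, w x y * (2 * (v y - v x) * (e y - e x)))
      = 2 * ∑ y, w x y * (v y - v x) * (e y - e x) := by
    rw [Finset.mul_sum]
    apply Finset.sum_congr rfl
    intro y _
    ring
  rw [hsum2]
  norm_num
  left
  ring

lemma my_energy_hasDerivAt {V : Type*} [Fintype V] (μ : V → ℝ) (w : V → V → ℝ) (u0 : V → ℝ)
    (N : ℕ) (lam : ℝ) (v e : V → ℝ) :
    HasDerivAt (fun t : ℝ => energy μ w u0 N lam (fun x => v x + t * e x))
      (∑ x, μ x * ((1/(2*μ x)) * (∑ y, w x y * (v y - v x) * (e y - e x))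
        + lam * (Real.exp (u0 x + v x) * (Real.exp (u0 x + v x) - 1)^5 * e x)
        + (4 * π * (N:ℝ) / vol μ) * e x)) 0 := by
  have h := HasDerivAt.fun_sum (u := (Finset.univ : Finset V))
    (fun x _ => my_term_hasDerivAt μ w u0 x lam (4 * π * N / vol μ) v e)
  exact h

lemma my_gradSq_nonneg {V : Type*} [Fintype V] (μ : V → ℝ) (w : V → V → ℝ)
    (hnn : ∀ x y, 0 ≤ w x y) (hmu : ∀ x, 0 < μ x) (u : V → ℝ) (x : V) :
    0 ≤ gradSq μ w u x := by
  unfold gradSq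
  apply mul_nonneg
  · have := hmu x
    positivity
  · apply Finset.sum_nonneg
    intro y _
    have := hnn x y
    positivity

lemma my_gradSq_expand {V : Type*} [Fintype V] (μ : V → ℝ) (w : V → V → ℝ)
    (v vl : V → ℝ) (x : V) :
    gradSq μ w v x = gradSq μ w vl x + 2 * gamma μ w vl (fun y => v y - vl y) x
      + gradSq μ w (fun y => v y - vl y) x := by
  unfold gradSq gamma
  simp only
  rw [Finset.sum_congr rfl (fun y _ => (by ring : w x y * (v y - v x)^2
    = w x y * (vl y - vl x)^2 + 2 * (w x y * (vl y - vl x) * ((v y - vl y) - (v x - vl x)))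
      + w x y * ((v y - vl y) - (v x - vl x))^2))]
  rw [Finset.sum_add_distrib, Finset.sum_add_distrib, ← Finset.mul_sum]
  ring

lemma my_dirac_nonneg {V : Type*} [Fintype V] [DecidableEq V] (μ : V → ℝ) (hmu : ∀ x, 0 < μ x)
    {N : ℕ} (p : Fin N → V) (x : V) : 0 ≤ ∑ s, dirac μ (p s) x := by
  apply Finset.sum_nonneg
  intro s _
  unfold dirac
  split
  · have := hmu (p s)
    positivity
  · exact le_refl 0

lemma my_dirac_le {V : Type*} [Fintype V] [DecidableEq V] (μ : V → ℝ) (hmu : ∀ x, 0 < μ x)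
    {N : ℕ} (p : Fin N → V) (hp : Function.Injective p) (x : V) :
    ∑ s, dirac μ (p s) x ≤ 1 / μ x := by
  by_cases hx : ∃ s, x = p s
  · obtain ⟨s0, hs0⟩ := hx
    have : ∑ s, dirac μ (p s) x = 1 / μ x := by
      rw [Finset.sum_eq_single s0]
      · unfold dirac
        rw [if_pos hs0, hs0]
      · intro s _ hs
        unfold dirac
        rw [if_neg]
        intro h
        exact hs (hp (by rw [← h, ← hs0]))
      · intro h
        exact absurd (Finset.mem_univ s0) h
    rw [this]
  · have h0 : ∑ s, dirac μ (p s) x = 0 := by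
      apply Finset.sum_eq_zero
      intro s _
      unfold dirac
      rw [if_neg (fun h => hx ⟨s, h⟩)]
    rw [h0]
    exact le_of_lt (one_div_pos.2 (hmu x))

lemma my_dirac_pos {V : Type*} [Fintype V] [DecidableEq V] (μ : V → ℝ) (hmu : ∀ x, 0 < μ x)
    {N : ℕ} (hN : 1 ≤ N) (p : Fin N → V) :
    0 < ∑ s, dirac μ (p s) (p ⟨0, hN⟩) := by
  apply Finset.sum_pos'
  · intro s _
    unfold dirac
    split
    · exact le_of_lt (one_div_pos.2 (hmu _))
    · exact le_refl 0
  · refine ⟨⟨0, hN⟩, Finset.mem_univ _, ?_⟩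
    unfold dirac
    rw [if_pos rfl]
    exact one_div_pos.2 (hmu _)

lemma my_deriv_eval {V : Type*} [Fintype V] [DecidableEq V] (μ : V → ℝ) (w : V → V → ℝ)
    (hsymm : ∀ x y, w x y = w y x) (hmu : ∀ x, 0 < μ x) (u0 vl : V → ℝ) (lam c : ℝ) (x0 : V)
    (e : V → ℝ) (he : ∀ y, e y = if y = x0 then 1 else 0) :
    (∑ x, μ x * ((1/(2*μ x)) * (∑ y, w x y * (vl y - vl x) * (e y - e x))
        + lam * (Real.exp (u0 x + vl x) * (Real.exp (u0 x + vl x) - 1)^5 * e x)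
        + c * e x))
      = μ x0 * (- lapl μ w vl x0
          + lam * (Real.exp (u0 x0 + vl x0) * (Real.exp (u0 x0 + vl x0) - 1)^5) + c) := by
  have h1 : ∀ g : V → ℝ, (∑ x, g x * e x) = g x0 := by
    intro g
    rw [Finset.sum_congr rfl (fun x _ => by rw [he x, mul_ite, mul_one, mul_zero]),
      Finset.sum_ite_eq' Finset.univ x0 g, if_pos (Finset.mem_univ x0)]
  have hsplit : (∑ x, μ x * ((1/(2*μ x)) * (∑ y, w x y * (vl y - vl x) * (e y - e x))
        + lam * (Real.exp (u0 x + vl x) * (Real.exp (u0 x + vl x) - 1)^5 * e x) + c * e x))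
      = integ μ (gamma μ w vl e)
        + ∑ x, (μ x * (lam * (Real.exp (u0 x + vl x) * (Real.exp (u0 x + vl x) - 1)^5) + c)) * e x := by
    unfold integ gamma
    rw [← Finset.sum_add_distrib]
    apply Finset.sum_congr rfl
    intro x _
    ring
  rw [hsplit, my_green μ w hsymm hmu vl e, h1]
  have h2 : integ μ (fun x => lapl μ w vl x * e x) = ∑ x, (μ x * lapl μ w vl x) * e x := by
    unfold integ
    apply Finset.sum_congr rfl
    intro x _
    ring
  rw [h2, h1]
  ring
set_option maxHeartbeats 4000000 in
/-- there exists `λ̂ ≥ (6^6/5^5)·(4πN/Vol(V))` such that for every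
`λ > λ̂` the reduced equation has a solution `v_λ` which is a local minimum point of
`I_λ` for the `W^{1,2}` norm. -/
theorem local_minimum_solution {V : Type*} [Fintype V] [DecidableEq V] [Nonempty V]
    (w : V → V → ℝ) (μ : V → ℝ)
    (hsymm : ∀ x y, w x y = w y x) (hnn : ∀ x y, 0 ≤ w x y)
    (hconn : ∀ x y : V, Relation.ReflTransGen (fun a b => 0 < w a b) x y)
    (hmu : ∀ x, 0 < μ x)
    (N : ℕ) (hN : 1 ≤ N) (p : Fin N → V) (hp : Function.Injective p)
    (u0 : V → ℝ)
    (hu0 : ∀ x, lapl μ w u0 x = -(4 * π * N / vol μ) + 4 * π * ∑ s, dirac μ (p s) x) :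
    ∃ lamhat : ℝ,
      lamhat ≥ (6 ^ 6 / 5 ^ 5) * (4 * π * N / vol μ) ∧
      ∀ lam : ℝ, lam > lamhat → ∃ vl : V → ℝ,
        (∀ x, lapl μ w vl x =
          lam * Real.exp (u0 x + vl x) * (Real.exp (u0 x + vl x) - 1) ^ 5 + 4 * π * N / vol μ) ∧
        ∃ ε : ℝ, 0 < ε ∧ ∀ v : V → ℝ,
          sobNorm μ w (fun x => v x - vl x) ≤ ε →
          energy μ w u0 N lam vl ≤ energy μ w u0 N lam v := by
  classical
  have hπ := Real.pi_pos
  have hlog6 : 0 < Real.log 6 := Real.log_pos (by norm_num)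
  have hvol : 0 < vol μ := by
    unfold vol
    exact Finset.sum_pos (fun x _ => hmu x) Finset.univ_nonempty
  have hN1 : (1:ℝ) ≤ (N:ℝ) := by exact_mod_cast hN
  have hc : 0 < 4 * π * (N:ℝ) / vol μ := by
    apply div_pos _ hvol
    nlinarith
  obtain ⟨xm, -, hxm⟩ := Finset.exists_min_image Finset.univ μ
    ⟨Classical.arbitrary V, Finset.mem_univ _⟩
  have hμm : 0 < μ xm := hmu xm
  have hd0 : 0 < 4 * π * (1 / μ xm) := mul_pos (by nlinarith) (one_div_pos.2 hμm)
  refine ⟨(6 ^ 6 / 5 ^ 5) * (4 * π * N / vol μ + 4 * π * (1 / μ xm)), ?_, ?_⟩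
  · rw [ge_iff_le, mul_add]
    have h0 : 0 ≤ (6 ^ 6 / 5 ^ 5 : ℝ) * (4 * π * (1 / μ xm)) :=
      mul_nonneg (by norm_num) hd0.le
    linarith
  · intro lam hlam
    have hlamhat0 : 0 < (6 ^ 6 / 5 ^ 5 : ℝ) * (4 * π * N / vol μ + 4 * π * (1 / μ xm)) :=
      mul_pos (by norm_num) (by linarith)
    have hlam0 : 0 < lam := lt_trans hlamhat0 hlam
    have hkey : 4 * π * (N:ℝ) / vol μ + 4 * π * (1 / μ xm) < lam * (3125 / 46656) := by
      nlinarith [hlam]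
    -- the compact box
    set B : Set (V → ℝ) :=
      Set.pi Set.univ (fun x => Set.Icc (-Real.log 6 - u0 x) (-u0 x)) with hB_def
    have hBcompact : IsCompact B := isCompact_univ_pi (fun x => isCompact_Icc)
    have hBne : B.Nonempty := by
      refine ⟨fun x => -u0 x, ?_⟩
      rw [hB_def, Set.mem_univ_pi]
      intro x
      exact ⟨by linarith, le_refl _⟩
    have hcont : Continuous (energy μ w u0 N lam) := by
      unfold energy integ gradSq
      fun_prop
    obtain ⟨vl, hvlB, hvlmin⟩ := hBcompact.exists_isMinOn hBne hcont.continuousOn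
    have hbox : ∀ x, -Real.log 6 - u0 x ≤ vl x ∧ vl x ≤ -u0 x := by
      intro x
      have h := (Set.mem_univ_pi.1 hvlB) x
      exact ⟨h.1, h.2⟩
    -- KKT conditions at the minimizer
    have hKKT : ∀ x0 : V,
        (-Real.log 6 - u0 x0 < vl x0 →
          lam * (Real.exp (u0 x0 + vl x0) * (Real.exp (u0 x0 + vl x0) - 1) ^ 5)
            + 4 * π * N / vol μ ≤ lapl μ w vl x0)
        ∧ (vl x0 < -u0 x0 →
          lapl μ w vl x0 ≤ lam * (Real.exp (u0 x0 + vl x0) * (Real.exp (u0 x0 + vl x0) - 1) ^ 5)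
            + 4 * π * N / vol μ) := by
      intro x0
      set e : V → ℝ := fun y => if y = x0 then (1:ℝ) else 0 with he_def
      have hD := my_energy_hasDerivAt μ w u0 N lam vl e
      rw [my_deriv_eval μ w hsymm hmu u0 vl lam (4 * π * N / vol μ) x0 e
        (fun y => by rw [he_def])] at hD
      have h00 : (fun x => vl x + (0:ℝ) * e x) = vl := by
        funext x
        ring
      have hmem : ∀ t : ℝ, -Real.log 6 - u0 x0 - vl x0 ≤ t → t ≤ -u0 x0 - vl x0 →
          (fun x => vl x + t * e x) ∈ B := by
        intro t ht1 ht2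
        rw [hB_def, Set.mem_univ_pi]
        intro x
        by_cases hx : x = x0
        · subst hx
          simp only [he_def, if_pos rfl, mul_one]
          exact ⟨by linarith, by linarith⟩
        · simp only [he_def, if_neg hx, mul_zero, add_zero]
          exact ⟨(hbox x).1, (hbox x).2⟩
      have hμx := hmu x0
      constructor
      · intro hlt
        have hs : -Real.log 6 - u0 x0 - vl x0 < 0 := by linarith
        have hmin : ∀ t, -Real.log 6 - u0 x0 - vl x0 ≤ t → t ≤ 0 →
            energy μ w u0 N lam (fun x => vl x + (0:ℝ) * e x)
              ≤ energy μ w u0 N lam (fun x => vl x + t * e x) := by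
          intro t ht1 ht2
          rw [h00]
          exact (isMinOn_iff.1 hvlmin) _ (hmem t ht1 (by linarith [(hbox x0).2]))
        have hnp := my_deriv_nonpos_left hD hs hmin
        by_contra hcon
        push_neg at hcon
        nlinarith
      · intro hlt
        have hs : (0:ℝ) < -u0 x0 - vl x0 := by linarith
        have hmin : ∀ t, 0 ≤ t → t ≤ -u0 x0 - vl x0 →
            energy μ w u0 N lam (fun x => vl x + (0:ℝ) * e x)
              ≤ energy μ w u0 N lam (fun x => vl x + t * e x) := by
          intro t ht1 ht2
          rw [h00]
          exact (isMinOn_iff.1 hvlmin) _ (hmem t (by linarith [(hbox x0).1]) ht2)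
        have hnp := my_deriv_nonneg_right hD hs hmin
        by_contra hcon
        push_neg at hcon
        nlinarith
    have hu_le : ∀ x, u0 x + vl x ≤ 0 := fun x => by linarith [(hbox x).2]
    have hu_ge : ∀ x, -Real.log 6 ≤ u0 x + vl x := fun x => by linarith [(hbox x).1]
    -- upper boundary is never attained
    have hupper : ∀ x0, u0 x0 + vl x0 = 0 →
        (∑ s, dirac μ (p s) x0) = 0 ∧ ∀ y, 0 < w x0 y → u0 y + vl y = 0 := by
      intro x0 h0
      have hltb : -Real.log 6 - u0 x0 < vl x0 := by linarith
      have hK := (hKKT x0).1 hltb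
      have hE0 : Real.exp (u0 x0 + vl x0) * (Real.exp (u0 x0 + vl x0) - 1) ^ 5 = 0 := by
        rw [h0]
        simp
      rw [hE0, mul_zero, zero_add] at hK
      have hla := my_lapl_add μ w u0 vl x0
      have h2 : lapl μ w (fun y => u0 y + vl y) x0 ≤ 0 := by
        unfold lapl
        apply mul_nonpos_iff.2
        refine Or.inl ⟨one_div_nonneg.2 (hmu x0).le, ?_⟩
        apply Finset.sum_nonpos
        intro y _
        apply mul_nonpos_iff.2
        refine Or.inl ⟨hnn x0 y, ?_⟩
        simp only
        linarith [hu_le y, h0]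
      have h3 : 4 * π * ∑ s, dirac μ (p s) x0 ≤ lapl μ w (fun y => u0 y + vl y) x0 := by
        rw [hla, hu0 x0]
        linarith
      have hdn := my_dirac_nonneg μ hmu p x0
      have hδ0 : ∑ s, dirac μ (p s) x0 = 0 := by
        apply le_antisymm _ hdn
        by_contra hcon
        push_neg at hcon
        nlinarith
      have h4 : lapl μ w (fun y => u0 y + vl y) x0 = 0 := by
        rw [hδ0, mul_zero] at h3
        linarith
      have h5 : ∑ y, w x0 y * ((u0 y + vl y) - (u0 x0 + vl x0)) = 0 := by
        unfold lapl at h4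
        have hne : (1:ℝ) / μ x0 ≠ 0 := ne_of_gt (one_div_pos.2 (hmu x0))
        rcases mul_eq_zero.1 h4 with h | h
        · exact absurd h hne
        · exact h
      refine ⟨hδ0, ?_⟩
      intro y hy
      have hterms : ∀ y ∈ Finset.univ, w x0 y * ((u0 y + vl y) - (u0 x0 + vl x0)) ≤ 0 := by
        intro y _
        apply mul_nonpos_iff.2
        exact Or.inl ⟨hnn x0 y, by linarith [hu_le y, h0]⟩
      have h6 := (Finset.sum_eq_zero_iff_of_nonpos hterms).1 h5 y (Finset.mem_univ y)
      rcases mul_eq_zero.1 h6 with h | h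
      · exact absurd h (ne_of_gt hy)
      · linarith [h0, h]
    have hstrict_top : ∀ x, u0 x + vl x < 0 := by
      intro x
      rcases lt_or_eq_of_le (hu_le x) with h | h
      · exact h
      exfalso
      have hprop : ∀ z, Relation.ReflTransGen (fun a b => 0 < w a b) x z → u0 z + vl z = 0 := by
        intro z hz
        induction hz with
        | refl => exact h
        | tail h1 h2 ih => exact (hupper _ ih).2 _ h2
      have hz0 := (hupper (p ⟨0, hN⟩) (hprop _ (hconn x (p ⟨0, hN⟩)))).1
      have hpos := my_dirac_pos μ hmu hN p
      rw [hz0] at hpos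
      exact lt_irrefl 0 hpos
    have hvl_lt_b : ∀ x, vl x < -u0 x := fun x => by linarith [hstrict_top x]
    have hstrict_bot : ∀ x, -Real.log 6 - u0 x < vl x := by
      intro x0
      rcases lt_or_eq_of_le (hbox x0).1 with h | h
      · exact h
      exfalso
      have hu : u0 x0 + vl x0 = -Real.log 6 := by linarith
      have hK := (hKKT x0).2 (hvl_lt_b x0)
      have hEval : Real.exp (u0 x0 + vl x0) * (Real.exp (u0 x0 + vl x0) - 1) ^ 5
          = -(3125 / 46656) := by
        rw [hu, Real.exp_neg, Real.exp_log (by norm_num)]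
        norm_num
      rw [hEval] at hK
      have hmin_pr : 0 ≤ lapl μ w (fun y => u0 y + vl y) x0 := by
        unfold lapl
        apply mul_nonneg (one_div_nonneg.2 (hmu x0).le)
        apply Finset.sum_nonneg
        intro y _
        apply mul_nonneg (hnn x0 y)
        simp only
        linarith [hu_ge y, hu]
      have hla := my_lapl_add μ w u0 vl x0
      have hdle := my_dirac_le μ hmu p hp x0
      have h1μ : 1 / μ x0 ≤ 1 / μ xm :=
        one_div_le_one_div_of_le hμm (hxm x0 (Finset.mem_univ x0))
      have hp1 : 4 * π * (∑ s, dirac μ (p s) x0) ≤ 4 * π * (1 / μ x0) := by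
        nlinarith [hdle, hπ]
      have hp2 : 4 * π * (1 / μ x0) ≤ 4 * π * (1 / μ xm) := by
        have h' := mul_le_mul_of_nonneg_left h1μ (show (0:ℝ) ≤ 4 * π by linarith)
        linarith [h']
      rw [hu0 x0] at hla
      rw [hla] at hmin_pr
      linarith [hp1, hp2, hK, hkey, hc]
    -- the Euler–Lagrange equation
    have heq : ∀ x, lapl μ w vl x =
        lam * Real.exp (u0 x + vl x) * (Real.exp (u0 x + vl x) - 1) ^ 5
          + 4 * π * N / vol μ := by
      intro x
      have h1 := (hKKT x).1 (hstrict_bot x)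
      have h2 := (hKKT x).2 (hvl_lt_b x)
      rw [mul_assoc]
      linarith
    refine ⟨vl, heq, ?_⟩
    -- local minimality
    obtain ⟨z, -, hz⟩ := Finset.exists_min_image Finset.univ
      (fun x => min (vl x - (-Real.log 6 - u0 x)) (-u0 x - vl x))
      ⟨Classical.arbitrary V, Finset.mem_univ _⟩
    set η := min (vl z - (-Real.log 6 - u0 z)) (-u0 z - vl z) with hη_def
    have hηpos : 0 < η :=
      lt_min (by linarith [hstrict_bot z]) (by linarith [hvl_lt_b z])
    refine ⟨Real.sqrt (μ xm) * η, mul_pos (Real.sqrt_pos.2 hμm) hηpos, ?_⟩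
    intro v hv
    have hpt : ∀ x, |v x - vl x| ≤ η := by
      intro x
      have h1 : Real.sqrt (μ x) * |v x - vl x| ≤ sobNorm μ w (fun y => v y - vl y) := by
        have heq1 : Real.sqrt (μ x) * |v x - vl x| = Real.sqrt (μ x * (v x - vl x) ^ 2) := by
          rw [Real.sqrt_mul (hmu x).le, Real.sqrt_sq_eq_abs]
        rw [heq1]
        unfold sobNorm integ
        apply Real.sqrt_le_sqrt
        have hterm : ∀ y ∈ Finset.univ,
            (0:ℝ) ≤ μ y * (gradSq μ w (fun x => v x - vl x) y + (v y - vl y) ^ 2) := by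
          intro y _
          apply mul_nonneg (hmu y).le
          exact add_nonneg (my_gradSq_nonneg μ w hnn hmu _ y) (sq_nonneg _)
        calc μ x * (v x - vl x) ^ 2
            ≤ μ x * (gradSq μ w (fun x => v x - vl x) x + (v x - vl x) ^ 2) := by
              have := my_gradSq_nonneg μ w hnn hmu (fun x => v x - vl x) x
              nlinarith [hmu x]
          _ ≤ ∑ y, μ y * (gradSq μ w (fun x => v x - vl x) y + (v y - vl y) ^ 2) :=
              Finset.single_le_sum hterm (Finset.mem_univ x)
      have h2 : Real.sqrt (μ xm) ≤ Real.sqrt (μ x) :=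
        Real.sqrt_le_sqrt (hxm x (Finset.mem_univ x))
      have h3 : Real.sqrt (μ x) * |v x - vl x| ≤ Real.sqrt (μ x) * η :=
        le_trans (le_trans h1 hv) (mul_le_mul_of_nonneg_right h2 hηpos.le)
      exact le_of_mul_le_mul_left h3 (Real.sqrt_pos.2 (hmu x))
    -- pointwise convexity estimate
    have hconv : ∀ x,
        μ x * ((1/2) * gradSq μ w vl x + (lam/6) * (Real.exp (u0 x + vl x) - 1) ^ 6
            + (4 * π * N / vol μ) * vl x)
          + μ x * (gamma μ w vl (fun y => v y - vl y) x
            + (lam * (Real.exp (u0 x + vl x) * (Real.exp (u0 x + vl x) - 1) ^ 5)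
              + 4 * π * N / vol μ) * (v x - vl x))
        ≤ μ x * ((1/2) * gradSq μ w v x + (lam/6) * (Real.exp (u0 x + v x) - 1) ^ 6
            + (4 * π * N / vol μ) * v x) := by
      intro x
      have hg := my_gradSq_expand μ w v vl x
      have hgn := my_gradSq_nonneg μ w hnn hmu (fun y => v y - vl y) x
      have habs := abs_le.1 (hpt x)
      have hηx : η ≤ vl x - (-Real.log 6 - u0 x) :=
        le_trans (hz x (Finset.mem_univ x)) (min_le_left _ _)
      have ht1 : -Real.log 6 ≤ u0 x + vl x := hu_ge x
      have ht2 : -Real.log 6 ≤ u0 x + v x := by linarith [habs.1]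
      have htan := my_tangent6 ht1 ht2
      have htan2 := mul_le_mul_of_nonneg_left htan (by linarith : (0:ℝ) ≤ lam / 6)
      have hS : ((1/2) * gradSq μ w vl x + (lam/6) * (Real.exp (u0 x + vl x) - 1) ^ 6
            + (4 * π * N / vol μ) * vl x)
          + (gamma μ w vl (fun y => v y - vl y) x
            + (lam * (Real.exp (u0 x + vl x) * (Real.exp (u0 x + vl x) - 1) ^ 5)
              + 4 * π * N / vol μ) * (v x - vl x))
          ≤ (1/2) * gradSq μ w v x + (lam/6) * (Real.exp (u0 x + v x) - 1) ^ 6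
            + (4 * π * N / vol μ) * v x := by
        rw [hg]
        ring_nf at htan2 ⊢
        nlinarith [htan2, hgn]
      rw [← mul_add]
      exact mul_le_mul_of_nonneg_left hS (hmu x).le
    -- the linear correction vanishes
    have hzero : ∑ x, μ x * (gamma μ w vl (fun y => v y - vl y) x
        + (lam * (Real.exp (u0 x + vl x) * (Real.exp (u0 x + vl x) - 1) ^ 5)
          + 4 * π * N / vol μ) * (v x - vl x)) = 0 := by
      have hgreen := my_green μ w hsymm hmu vl (fun y => v y - vl y)
      unfold integ at hgreen
      have hsplit : ∑ x, μ x * (gamma μ w vl (fun y => v y - vl y) x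
          + (lam * (Real.exp (u0 x + vl x) * (Real.exp (u0 x + vl x) - 1) ^ 5)
            + 4 * π * N / vol μ) * (v x - vl x))
          = (∑ x, μ x * gamma μ w vl (fun y => v y - vl y) x)
            + ∑ x, μ x * ((lam * (Real.exp (u0 x + vl x) * (Real.exp (u0 x + vl x) - 1) ^ 5)
              + 4 * π * N / vol μ) * (v x - vl x)) := by
        rw [← Finset.sum_add_distrib]
        apply Finset.sum_congr rfl
        intro x _
        ring
      rw [hsplit, hgreen, neg_add_eq_sub, ← Finset.sum_sub_distrib]
      apply Finset.sum_eq_zero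
      intro x _
      simp only
      rw [heq x]
      ring
    -- conclusion
    unfold energy integ
    have hs := Finset.sum_le_sum (fun x (_ : x ∈ Finset.univ) => hconv x)
    rw [Finset.sum_add_distrib, hzero, add_zero] at hs
    exact hs
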